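/- For every real number λ in the interval [-1, 1], there exist a finite connected bipartite graph and a reversible stochastic transition matrix P associated with positive edge conductances on that graph such that λ is an eigenvalue of P. -/

import Mathlib

/-- The path graph on `Fin n`. -/
def pathG (n : ℕ) : SimpleGraph (Fin n) where
  Adj x y := x.val + 1 = y.val ∨ y.val + 1 = x.val
  symm := ⟨fun x y h => Or.symm h⟩
  loopless := ⟨fun x (h : x.val + 1 = x.val ∨ x.val + 1 = x.val) => by omega⟩

lemma pathG_reach (n : ℕ) (hn : 0 < n) (x : Fin n) : (pathG n).Reachable x ⟨0, hn⟩ := by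
  obtain ⟨v, hv⟩ := x
  induction v with
  | zero => exact SimpleGraph.Reachable.refl _
  | succ k ih =>
    refine SimpleGraph.Reachable.trans ?_ (ih (by omega))
    exact SimpleGraph.Adj.reachable (Or.inr rfl)

lemma pathG_conn (n : ℕ) (hn : 0 < n) : (pathG n).Connected := by
  rw [SimpleGraph.connected_iff]
  exact ⟨fun x y => (pathG_reach n hn x).trans (pathG_reach n hn y).symm, ⟨⟨0, hn⟩⟩⟩

lemma pathG_col (n : ℕ) : (pathG n).Colorable 2 :=
  ⟨SimpleGraph.Coloring.mk (fun x => ⟨x.val % 2, Nat.mod_lt _ (by norm_num)⟩)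
    (by intro x y h; simp only [pathG] at h; simp only [Ne, Fin.mk.injEq]; omega)⟩

/-- Package the `n = 4` weighted path construction. -/
lemma case4 (lam t : ℝ) (ht : 0 < t) (f : Fin 4 → ℝ) (hf : f ≠ 0)
    (heq : ∀ x, ∑ y, ((!![0,1,0,0;1,0,t,0;0,t,0,1;0,0,1,0] : Matrix (Fin 4) (Fin 4) ℝ) x y
      / ∑ y', !![0,1,0,0;1,0,t,0;0,t,0,1;0,0,1,0] x y') * f y = lam * f x) :
    ∃ (n : ℕ) (G : SimpleGraph (Fin n)) (a : Fin n → Fin n → ℝ),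
      G.Connected ∧ G.Colorable 2 ∧
      (∀ x y, a x y = a y x) ∧
      (∀ x y, 0 < a x y ↔ G.Adj x y) ∧
      (∀ x y, ¬ G.Adj x y → a x y = 0) ∧
      ∃ f : Fin n → ℝ, f ≠ 0 ∧
        ∀ x, ∑ y, (a x y / ∑ y', a x y') * f y = lam * f x := by
  refine ⟨4, pathG 4, fun x y => !![0,1,0,0;1,0,t,0;0,t,0,1;0,0,1,0] x y,
    pathG_conn 4 (by norm_num), pathG_col 4, ?_, ?_, ?_, f, hf, heq⟩
  · intro x y
    fin_cases x <;> fin_cases y <;>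
      norm_num [Matrix.cons_val_zero, Matrix.cons_val_one, Matrix.head_cons,
        Matrix.cons_val_two, Matrix.cons_val_three, Matrix.vecHead, Matrix.vecTail]
  · intro x y
    fin_cases x <;> fin_cases y <;>
      norm_num [pathG, ht, Matrix.cons_val_zero, Matrix.cons_val_one, Matrix.head_cons,
        Matrix.cons_val_two, Matrix.cons_val_three, Matrix.vecHead, Matrix.vecTail]
  · intro x y h
    fin_cases x <;> fin_cases y <;>
      norm_num [pathG, Matrix.cons_val_zero, Matrix.cons_val_one, Matrix.head_cons,
        Matrix.cons_val_two, Matrix.cons_val_three, Matrix.vecHead, Matrix.vecTail] at *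

/-- For every real `λ ∈ [-1,1]` there are a finite connected bipartite graph and a
reversible stochastic transition matrix `P` coming from positive edge conductances
on that graph, such that `λ` is an eigenvalue of `P`. -/
theorem stmt0 (lam : ℝ) (hlam : lam ∈ Set.Icc (-1 : ℝ) 1) :
    ∃ (n : ℕ) (G : SimpleGraph (Fin n)) (a : Fin n → Fin n → ℝ),
      G.Connected ∧ G.Colorable 2 ∧
      (∀ x y, a x y = a y x) ∧
      (∀ x y, 0 < a x y ↔ G.Adj x y) ∧
      (∀ x y, ¬ G.Adj x y → a x y = 0) ∧
      ∃ f : Fin n → ℝ, f ≠ 0 ∧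
        ∀ x, ∑ y, (a x y / ∑ y', a x y') * f y = lam * f x := by
  obtain ⟨hl, hr⟩ := hlam
  rcases eq_or_lt_of_le hr with h1 | h1
  · -- lam = 1
    refine case4 lam 1 one_pos ![1,1,1,1] ?_ ?_
    · intro h
      have := congrFun h 0
      norm_num [Matrix.cons_val_zero] at this
    · intro x
      fin_cases x <;>
        norm_num [Fin.sum_univ_four, h1, Matrix.cons_val_zero, Matrix.cons_val_one,
          Matrix.head_cons, Matrix.cons_val_two, Matrix.cons_val_three,
          Matrix.vecHead, Matrix.vecTail]
  rcases eq_or_lt_of_le hl with hm1 | hm1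
  · -- lam = -1
    refine case4 lam 1 one_pos ![1,-1,1,-1] ?_ ?_
    · intro h
      have := congrFun h 0
      norm_num [Matrix.cons_val_zero] at this
    · intro x
      fin_cases x <;>
        norm_num [Fin.sum_univ_four, ← hm1, Matrix.cons_val_zero, Matrix.cons_val_one,
          Matrix.head_cons, Matrix.cons_val_two, Matrix.cons_val_three,
          Matrix.vecHead, Matrix.vecTail]
  rcases lt_trichotomy lam 0 with hneg | hz | hpos
  · -- lam ∈ (-1, 0)
    have hne : lam ≠ 0 := ne_of_lt hneg
    refine case4 lam ((-(1+lam))/lam) (div_pos_of_neg_of_neg (by linarith) hneg)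
      ![1, lam, lam, 1] ?_ ?_
    · intro h
      have := congrFun h 0
      norm_num [Matrix.cons_val_zero] at this
    · intro x
      fin_cases x <;>
        norm_num [Fin.sum_univ_four, Matrix.cons_val_zero, Matrix.cons_val_one,
          Matrix.head_cons, Matrix.cons_val_two, Matrix.cons_val_three,
          Matrix.vecHead, Matrix.vecTail] <;>
        field_simp <;> ring
  · -- lam = 0 : path on 3 vertices
    refine ⟨3, pathG 3, fun x y => !![0,1,0;1,0,1;0,1,0] x y,
      pathG_conn 3 (by norm_num), pathG_col 3, ?_, ?_, ?_, ![1,0,-1], ?_, ?_⟩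
    · intro x y
      fin_cases x <;> fin_cases y <;>
        norm_num [Matrix.cons_val_zero, Matrix.cons_val_one, Matrix.head_cons,
          Matrix.cons_val_two, Matrix.vecHead, Matrix.vecTail]
    · intro x y
      fin_cases x <;> fin_cases y <;>
        norm_num [pathG, Matrix.cons_val_zero, Matrix.cons_val_one, Matrix.head_cons,
          Matrix.cons_val_two, Matrix.vecHead, Matrix.vecTail]
    · intro x y h
      fin_cases x <;> fin_cases y <;>
        norm_num [pathG, Matrix.cons_val_zero, Matrix.cons_val_one, Matrix.head_cons,
          Matrix.cons_val_two, Matrix.vecHead, Matrix.vecTail] at *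
    · intro h
      have := congrFun h 0
      norm_num [Matrix.cons_val_zero] at this
    · intro x
      fin_cases x <;>
        norm_num [Fin.sum_univ_three, hz, Matrix.cons_val_zero, Matrix.cons_val_one,
          Matrix.head_cons, Matrix.cons_val_two, Matrix.vecHead, Matrix.vecTail]
  · -- lam ∈ (0, 1)
    have hne : lam ≠ 0 := ne_of_gt hpos
    refine case4 lam ((1-lam)/lam) (div_pos (by linarith) hpos) ![1, lam, -lam, -1] ?_ ?_
    · intro h
      have := congrFun h 0
      norm_num [Matrix.cons_val_zero] at this
    · intro x
      fin_cases x <;>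
        norm_num [Fin.sum_univ_four, Matrix.cons_val_zero, Matrix.cons_val_one,
          Matrix.head_cons, Matrix.cons_val_two, Matrix.cons_val_three,
          Matrix.vecHead, Matrix.vecTail] <;>
        field_simp <;> ring
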